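/- arXiv:1010.5052 — 11 statements merged into one kernel-verified Lean document; each statement's English description precedes it below -/
import Mathlib

section
/- Let V be a real inner product space of dimension 4n with inner product g, equipped with a hyperhermitian structure (J₁,J₂,J₃). Let T be a 3-form on V which is of type (1,2)+(2,1) with respect to each of J₁, J₂, J₃ and satisfies the mixed type identity. Then for every orthonormal basis (e_a)_{a=1}^{4n} of V and every X ∈ V, ∑_{a=1}^{4n} T(J₁X,e_a,J₁e_a) = ∑_{a=1}^{4n} T(J₂X,e_a,J₂e_a) = ∑_{a=1}^{4n} T(J₃X,e_a,J₃e_a). In particular, the three Lee forms θ_s(X) = −(1/2)∑_{a=1}^{4n} T(J_sX,e_a,J_se_a), s = 1,2,3, coincide. -/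
open scoped RealInnerProductSpace

private lemma sum_bilin_eq {V : Type*} [NormedAddCommGroup V] [InnerProductSpace ℝ V]
    {N : ℕ} (e f : OrthonormalBasis (Fin N) ℝ V) (Q : V →ₗ[ℝ] V →ₗ[ℝ] ℝ) :
    ∑ a, Q (f a) (f a) = ∑ a, Q (e a) (e a) := by
  have key : ∀ a, Q (f a) (f a)
      = ∑ i, ∑ j, ⟪e i, f a⟫ * (⟪e j, f a⟫ * Q (e i) (e j)) := by
    intro a
    conv_lhs => rw [← e.sum_repr' (f a)]
    simp only [map_sum, LinearMap.sum_apply, map_smul, LinearMap.smul_apply, smul_eq_mul, Finset.mul_sum]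
    rw [Finset.sum_comm]
    exact Finset.sum_congr rfl fun i _ => Finset.sum_congr rfl fun j _ => by ring
  calc ∑ a, Q (f a) (f a)
      = ∑ a, ∑ i, ∑ j, ⟪e i, f a⟫ * (⟪e j, f a⟫ * Q (e i) (e j)) :=
        Finset.sum_congr rfl fun a _ => key a
    _ = ∑ i, ∑ j, ∑ a, ⟪e i, f a⟫ * (⟪e j, f a⟫ * Q (e i) (e j)) := by
        rw [Finset.sum_comm]
        exact Finset.sum_congr rfl fun i _ => Finset.sum_comm
    _ = ∑ i, ∑ j, ⟪e i, e j⟫ * Q (e i) (e j) := by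
        refine Finset.sum_congr rfl fun i _ => Finset.sum_congr rfl fun j _ => ?_
        rw [← f.sum_inner_mul_inner (e i) (e j), Finset.sum_mul]
        refine Finset.sum_congr rfl fun a _ => ?_
        rw [real_inner_comm (f a) (e j)]
        ring
    _ = ∑ i, Q (e i) (e i) := by
        refine Finset.sum_congr rfl fun i _ => ?_
        have horth := e.orthonormal
        rw [orthonormal_iff_ite] at horth
        simp [horth]

private lemma sum_reindexJ {V : Type*} [NormedAddCommGroup V] [InnerProductSpace ℝ V]
    [FiniteDimensional ℝ V] {N : ℕ} (e : OrthonormalBasis (Fin N) ℝ V)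
    (J : V →ₗ[ℝ] V) (hiso : ∀ X Y : V, ⟪J X, J Y⟫ = ⟪X, Y⟫)
    (Q : V →ₗ[ℝ] V →ₗ[ℝ] ℝ) :
    ∑ a, Q (J (e a)) (J (e a)) = ∑ a, Q (e a) (e a) := by
  have hinj : Function.Injective J := by
    intro x y hxy
    have h0 : ⟪x - y, x - y⟫ = (0:ℝ) := by
      rw [← hiso]; simp [hxy]
    rwa [inner_self_eq_zero, sub_eq_zero] at h0
  let equiv := LinearEquiv.ofBijective J ⟨hinj, LinearMap.injective_iff_surjective.mp hinj⟩
  let b := e.toBasis.map equiv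
  have hb : ∀ i, b i = J (e i) := fun i => by
    simp [b, Module.Basis.map_apply, equiv, LinearEquiv.ofBijective_apply]
    rfl
  have horth : Orthonormal ℝ b := by
    rw [orthonormal_iff_ite]
    intro i j
    rw [hb, hb, hiso]
    have h := e.orthonormal
    rw [orthonormal_iff_ite] at h
    exact h i j
  have hf : ∀ a, (b.toOrthonormalBasis horth) a = J (e a) := fun a => by
    rw [Module.Basis.coe_toOrthonormalBasis]; exact hb a
  have := sum_bilin_eq e (b.toOrthonormalBasis horth) Q
  simpa [hf] using this

theorem stmt_0
    {V : Type*} [NormedAddCommGroup V] [InnerProductSpace ℝ V]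
    [FiniteDimensional ℝ V] {n : ℕ}
    (hdim : Module.finrank ℝ V = 4 * n)
    (J₁ J₂ J₃ : V →ₗ[ℝ] V)
    (hJ₁iso : ∀ X Y : V, ⟪J₁ X, J₁ Y⟫ = ⟪X, Y⟫)
    (hJ₂iso : ∀ X Y : V, ⟪J₂ X, J₂ Y⟫ = ⟪X, Y⟫)
    (hJ₃iso : ∀ X Y : V, ⟪J₃ X, J₃ Y⟫ = ⟪X, Y⟫)
    (hJ₁sq : ∀ X : V, J₁ (J₁ X) = -X)
    (hJ₂sq : ∀ X : V, J₂ (J₂ X) = -X)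
    (hJ₃sq : ∀ X : V, J₃ (J₃ X) = -X)
    (hJ₁₂ : ∀ X : V, J₁ (J₂ X) = J₃ X)
    (hJ₂₁ : ∀ X : V, J₂ (J₁ X) = -(J₃ X))
    (T : V →ₗ[ℝ] V →ₗ[ℝ] V →ₗ[ℝ] ℝ)
    (halt₁ : ∀ X Y Z : V, T X Y Z = -(T Y X Z))
    (halt₂ : ∀ X Y Z : V, T X Y Z = -(T X Z Y))
    (htype₁ : ∀ X Y Z : V,
      T X Y Z - T (J₁ X) (J₁ Y) Z - T (J₁ X) Y (J₁ Z) - T X (J₁ Y) (J₁ Z) = 0)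
    (htype₂ : ∀ X Y Z : V,
      T X Y Z - T (J₂ X) (J₂ Y) Z - T (J₂ X) Y (J₂ Z) - T X (J₂ Y) (J₂ Z) = 0)
    (htype₃ : ∀ X Y Z : V,
      T X Y Z - T (J₃ X) (J₃ Y) Z - T (J₃ X) Y (J₃ Z) - T X (J₃ Y) (J₃ Z) = 0)
    (hmix₁ : ∀ X Y Z : V,
      T (J₁ X) (J₁ Y) Z - T (J₃ X) (J₃ Y) Z - T (J₃ X) (J₁ Y) (J₂ Z) - T (J₁ X) (J₃ Y) (J₂ Z) = 0)
    (hmix₂ : ∀ X Y Z : V,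
      T (J₂ X) (J₂ Y) Z - T (J₁ X) (J₁ Y) Z - T (J₁ X) (J₂ Y) (J₃ Z) - T (J₂ X) (J₁ Y) (J₃ Z) = 0)
    (hmix₃ : ∀ X Y Z : V,
      T (J₃ X) (J₃ Y) Z - T (J₂ X) (J₂ Y) Z - T (J₂ X) (J₃ Y) (J₁ Z) - T (J₃ X) (J₂ Y) (J₁ Z) = 0)
    (e : OrthonormalBasis (Fin (4 * n)) ℝ V) (X : V) :
    ((∑ a, T (J₁ X) (e a) (J₁ (e a)) = ∑ a, T (J₂ X) (e a) (J₂ (e a))) ∧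
      (∑ a, T (J₂ X) (e a) (J₂ (e a)) = ∑ a, T (J₃ X) (e a) (J₃ (e a)))) ∧
    ((-(1 / 2 : ℝ)) * ∑ a, T (J₁ X) (e a) (J₁ (e a)) =
        (-(1 / 2 : ℝ)) * ∑ a, T (J₂ X) (e a) (J₂ (e a)) ∧
      (-(1 / 2 : ℝ)) * ∑ a, T (J₂ X) (e a) (J₂ (e a)) =
        (-(1 / 2 : ℝ)) * ∑ a, T (J₃ X) (e a) (J₃ (e a))) := by
  have hJ₃₂ : ∀ x : V, J₃ (J₂ x) = -(J₁ x) := fun x => by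
    rw [← hJ₁₂ (J₂ x), hJ₂sq, map_neg]
  have hJ₁₃ : ∀ x : V, J₁ (J₃ x) = -(J₂ x) := fun x => by
    rw [← hJ₁₂ x, hJ₁sq]
  have hJ₂₃ : ∀ x : V, J₂ (J₃ x) = J₁ x := fun x => by
    rw [← hJ₁₂ x, hJ₂₁ (J₂ x), hJ₃₂ x, neg_neg]
  have key1 : ∀ W : V, ∑ a, T W (J₂ (e a)) (J₁ (e a))
      = -∑ a, T W (e a) (J₃ (e a)) := by
    intro W
    have hr := sum_reindexJ e J₂ hJ₂iso ((T W).compl₁₂ J₂ J₁)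
    simp only [LinearMap.compl₁₂_apply] at hr
    rw [← hr]
    simp [hJ₂sq, hJ₁₂, map_neg, LinearMap.neg_apply]
  have key2 : ∀ W : V, ∑ a, T W (J₂ (e a)) (J₃ (e a))
      = ∑ a, T W (e a) (J₁ (e a)) := by
    intro W
    have hr := sum_reindexJ e J₂ hJ₂iso ((T W).compl₁₂ J₂ J₃)
    simp only [LinearMap.compl₁₂_apply] at hr
    rw [← hr]
    simp [hJ₂sq, hJ₃₂, map_neg, LinearMap.neg_apply]
  have key3 : ∀ W : V, ∑ a, T W (J₃ (e a)) (J₂ (e a))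
      = -∑ a, T W (e a) (J₁ (e a)) := by
    intro W
    have hr := sum_reindexJ e J₃ hJ₃iso ((T W).compl₁₂ J₃ J₂)
    simp only [LinearMap.compl₁₂_apply] at hr
    rw [← hr]
    simp [hJ₃sq, hJ₂₃, map_neg, LinearMap.neg_apply]
  have key4 : ∀ W : V, ∑ a, T W (J₃ (e a)) (J₁ (e a))
      = ∑ a, T W (e a) (J₂ (e a)) := by
    intro W
    have hr := sum_reindexJ e J₃ hJ₃iso ((T W).compl₁₂ J₃ J₁)
    simp only [LinearMap.compl₁₂_apply] at hr
    rw [← hr]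
    simp [hJ₃sq, hJ₁₃, map_neg, LinearMap.neg_apply]
  have hA : ∀ a : Fin (4 * n),
      T (J₁ X) (e a) (J₁ (e a)) + T (J₃ X) (J₂ (e a)) (J₁ (e a))
        - T (J₃ X) (e a) (J₃ (e a)) + T (J₁ X) (J₂ (e a)) (J₃ (e a)) = 0 := by
    intro a
    have h := htype₂ (J₁ X) (e a) (J₁ (e a))
    rw [hJ₂₁ X, hJ₂₁ (e a)] at h
    simp only [map_neg, LinearMap.neg_apply] at h
    linarith
  have h13 : ∑ a, T (J₁ X) (e a) (J₁ (e a)) = ∑ a, T (J₃ X) (e a) (J₃ (e a)) := by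
    have h0 : ∑ a : Fin (4 * n), (T (J₁ X) (e a) (J₁ (e a)) + T (J₃ X) (J₂ (e a)) (J₁ (e a))
        - T (J₃ X) (e a) (J₃ (e a)) + T (J₁ X) (J₂ (e a)) (J₃ (e a))) = 0 := by
      simp only [hA, Finset.sum_const_zero]
    rw [Finset.sum_add_distrib, Finset.sum_sub_distrib, Finset.sum_add_distrib,
      key1 (J₃ X), key2 (J₁ X)] at h0
    linarith
  have hB : ∀ a : Fin (4 * n),
      T (J₂ X) (e a) (J₂ (e a)) + T (J₁ X) (J₃ (e a)) (J₂ (e a))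
        - T (J₁ X) (e a) (J₁ (e a)) + T (J₂ X) (J₃ (e a)) (J₁ (e a)) = 0 := by
    intro a
    have h := htype₃ (J₂ X) (e a) (J₂ (e a))
    rw [hJ₃₂ X, hJ₃₂ (e a)] at h
    simp only [map_neg, LinearMap.neg_apply] at h
    linarith
  have h21 : ∑ a, T (J₂ X) (e a) (J₂ (e a)) = ∑ a, T (J₁ X) (e a) (J₁ (e a)) := by
    have h0 : ∑ a : Fin (4 * n), (T (J₂ X) (e a) (J₂ (e a)) + T (J₁ X) (J₃ (e a)) (J₂ (e a))
        - T (J₁ X) (e a) (J₁ (e a)) + T (J₂ X) (J₃ (e a)) (J₁ (e a))) = 0 := by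
      simp only [hB, Finset.sum_const_zero]
    rw [Finset.sum_add_distrib, Finset.sum_sub_distrib, Finset.sum_add_distrib,
      key3 (J₁ X), key4 (J₂ X)] at h0
    linarith
  refine ⟨⟨h21.symm, h21.trans h13⟩, by rw [h21], by rw [h21, h13]⟩
end

section
/- Let V be a real inner product space of dimension 4n with inner product g, equipped with a hyperhermitian structure (J₁,J₂,J₃). Let T be a 3-form on V which is of type (1,2)+(2,1) with respect to each of J₁, J₂, J₃ and satisfies the mixed type identity. Let T̂ : V×V → V be the vector-valued form determined by g(T̂(X,Y),Z) = T(X,Y,Z) for all Z, and define B : V×V → V by −4B(X,Y) = T̂(X,Y) − J₁T̂(X,J₁Y) − J₂T̂(X,J₂Y) − J₃T̂(X,J₃Y) + T̂(J₁X,J₁Y) + J₁T̂(J₁X,Y) − J₂T̂(J₁X,J₃Y) + J₃T̂(J₁X,J₂Y). Then for all X,Y,Z ∈ V one has g(B(X,Y),Z) = A(X,Y,Z), where A is the difference tensor defined by 2A(X,Y,Z) = −T(X,J₁Y,J₁Z) − T(J₁X,J₁Y,Z) − T(X,J₃Y,J₃Z) − T(J₁X,J₃Y,J₂Z). -/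
open scoped RealInnerProductSpace

theorem stmt_1
    {V : Type*} [NormedAddCommGroup V] [InnerProductSpace ℝ V]
    [FiniteDimensional ℝ V] {n : ℕ}
    (hdim : Module.finrank ℝ V = 4 * n)
    (J₁ J₂ J₃ : V →ₗ[ℝ] V)
    (hJ₁iso : ∀ X Y : V, ⟪J₁ X, J₁ Y⟫ = ⟪X, Y⟫)
    (hJ₂iso : ∀ X Y : V, ⟪J₂ X, J₂ Y⟫ = ⟪X, Y⟫)
    (hJ₃iso : ∀ X Y : V, ⟪J₃ X, J₃ Y⟫ = ⟪X, Y⟫)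
    (hJ₁sq : ∀ X : V, J₁ (J₁ X) = -X)
    (hJ₂sq : ∀ X : V, J₂ (J₂ X) = -X)
    (hJ₃sq : ∀ X : V, J₃ (J₃ X) = -X)
    (hJ₁₂ : ∀ X : V, J₁ (J₂ X) = J₃ X)
    (hJ₂₁ : ∀ X : V, J₂ (J₁ X) = -(J₃ X))
    (T : V →ₗ[ℝ] V →ₗ[ℝ] V →ₗ[ℝ] ℝ)
    (halt₁ : ∀ X Y Z : V, T X Y Z = -(T Y X Z))
    (halt₂ : ∀ X Y Z : V, T X Y Z = -(T X Z Y))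
    (htype₁ : ∀ X Y Z : V,
      T X Y Z - T (J₁ X) (J₁ Y) Z - T (J₁ X) Y (J₁ Z) - T X (J₁ Y) (J₁ Z) = 0)
    (htype₂ : ∀ X Y Z : V,
      T X Y Z - T (J₂ X) (J₂ Y) Z - T (J₂ X) Y (J₂ Z) - T X (J₂ Y) (J₂ Z) = 0)
    (htype₃ : ∀ X Y Z : V,
      T X Y Z - T (J₃ X) (J₃ Y) Z - T (J₃ X) Y (J₃ Z) - T X (J₃ Y) (J₃ Z) = 0)
    (hmix₁ : ∀ X Y Z : V,
      T (J₁ X) (J₁ Y) Z - T (J₃ X) (J₃ Y) Z - T (J₃ X) (J₁ Y) (J₂ Z) - T (J₁ X) (J₃ Y) (J₂ Z) = 0)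
    (hmix₂ : ∀ X Y Z : V,
      T (J₂ X) (J₂ Y) Z - T (J₁ X) (J₁ Y) Z - T (J₁ X) (J₂ Y) (J₃ Z) - T (J₂ X) (J₁ Y) (J₃ Z) = 0)
    (hmix₃ : ∀ X Y Z : V,
      T (J₃ X) (J₃ Y) Z - T (J₂ X) (J₂ Y) Z - T (J₂ X) (J₃ Y) (J₁ Z) - T (J₃ X) (J₂ Y) (J₁ Z) = 0)
    (That : V →ₗ[ℝ] V →ₗ[ℝ] V)
    (hThat : ∀ X Y Z : V, ⟪That X Y, Z⟫ = T X Y Z)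
    (B : V → V → V)
    (hB : ∀ X Y : V,
      (-4 : ℝ) • B X Y =
        That X Y - J₁ (That X (J₁ Y)) - J₂ (That X (J₂ Y)) - J₃ (That X (J₃ Y))
          + That (J₁ X) (J₁ Y) + J₁ (That (J₁ X) Y) - J₂ (That (J₁ X) (J₃ Y))
          + J₃ (That (J₁ X) (J₂ Y)))
    (A : V → V → V → ℝ)
    (hA : ∀ X Y Z : V,
      2 * A X Y Z =
        -(T X (J₁ Y) (J₁ Z)) - T (J₁ X) (J₁ Y) Z - T X (J₃ Y) (J₃ Z) - T (J₁ X) (J₃ Y) (J₂ Z))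
    : ∀ X Y Z : V, ⟪B X Y, Z⟫ = A X Y Z := by
  intro X Y Z
  -- auxiliary quaternion relations
  have hJ13 : ∀ W : V, J₁ (J₃ W) = -(J₂ W) := by
    intro W
    rw [← hJ₁₂ W, hJ₁sq]
  have hJ32 : ∀ W : V, J₃ (J₂ W) = -(J₁ W) := by
    intro W
    rw [← hJ₁₂ (J₂ W), hJ₂sq, map_neg]
  have hJ23 : ∀ W : V, J₂ (J₃ W) = J₁ W := by
    intro W
    rw [← hJ₁₂ W, hJ₂₁ (J₂ W), hJ32, neg_neg]
  have hJ31 : ∀ W : V, J₃ (J₁ W) = J₂ W := by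
    intro W
    rw [← hJ₁₂ (J₁ W), hJ₂₁, map_neg, hJ13, neg_neg]
  -- adjoint relations
  have hadj : ∀ (J : V →ₗ[ℝ] V), (∀ X Y : V, ⟪J X, J Y⟫ = ⟪X, Y⟫) → (∀ W : V, J (J W) = -W) →
      ∀ W U : V, ⟪J W, U⟫ = -⟪W, J U⟫ := by
    intro J hiso hsq W U
    have h1 : ⟪W, J U⟫ = ⟪J W, J (J U)⟫ := (hiso W (J U)).symm
    rw [hsq, inner_neg_right] at h1
    linarith
  -- expand the defining equation of B against Z
  have hBz := congrArg (fun v => ⟪v, Z⟫) (hB X Y)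
  simp only [inner_add_left, inner_sub_left, real_inner_smul_left] at hBz
  rw [hadj J₁ hJ₁iso hJ₁sq, hadj J₂ hJ₂iso hJ₂sq, hadj J₃ hJ₃iso hJ₃sq,
      hadj J₁ hJ₁iso hJ₁sq, hadj J₂ hJ₂iso hJ₂sq, hadj J₃ hJ₃iso hJ₃sq] at hBz
  simp only [hThat] at hBz
  -- key instances of the hypotheses
  have e1 := hmix₁ X Y Z
  have e2 := hmix₁ X (J₁ Z) (J₁ Y)
  have e3 := hmix₁ (J₁ X) Z (J₁ Y)
  have e4 := hmix₂ X Z Y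
  have e5 := htype₁ X Y Z
  have e6 := htype₁ X (J₂ Y) (J₂ Z)
  have e7 := htype₂ X (J₁ Y) (J₁ Z)
  have e8 := htype₃ (J₁ X) Y (J₁ Z)
  simp only [hJ₁sq, hJ₂sq, hJ₃sq, hJ₁₂, hJ₂₁, hJ13, hJ23, hJ31, hJ32,
    map_neg, LinearMap.neg_apply, neg_neg] at e1 e2 e3 e4 e5 e6 e7 e8
  have hA' := hA X Y Z
  linarith [hBz, e1, e2, e3, e4, e5, e6, e7, e8, hA',
    halt₂ (J₁ X) Z (J₁ Y), halt₂ (J₃ X) (J₂ Z) (J₁ Y), halt₂ (J₃ X) Z (J₃ Y),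
    halt₂ (J₁ X) (J₂ Z) (J₃ Y), halt₂ X (J₁ Z) (J₁ Y), halt₂ (J₂ X) (J₃ Z) (J₁ Y),
    halt₂ (J₂ X) (J₁ Z) (J₃ Y), halt₂ X (J₃ Z) (J₃ Y), halt₂ (J₂ X) (J₂ Z) Y,
    halt₂ (J₁ X) (J₁ Z) Y]
end

section
/- Let V be a real inner product space of dimension 4n with inner product g, equipped with a hyperhermitian structure (J₁,J₂,J₃). Let T be a 3-form on V which is of type (1,2)+(2,1) with respect to each of J₁, J₂, J₃ and satisfies the mixed type identity, let (e_a)_{a=1}^{4n} be an orthonormal basis of V, let θ(X) = −(1/2)∑_{a=1}^{4n} T(J₁X,e_a,J₁e_a) be the Lee form, and let A be the difference tensor defined by 2A(X,Y,Z) = −T(X,J₁Y,J₁Z) − T(J₁X,J₁Y,Z) − T(X,J₃Y,J₃Z) − T(J₁X,J₃Y,J₂Z). Then for every X ∈ V, ∑_{a=1}^{4n} A(X,e_a,e_a) = −2θ(X). -/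
open scoped RealInnerProductSpace

theorem stmt_2
    {V : Type*} [NormedAddCommGroup V] [InnerProductSpace ℝ V]
    [FiniteDimensional ℝ V] {n : ℕ}
    (hdim : Module.finrank ℝ V = 4 * n)
    (J₁ J₂ J₃ : V →ₗ[ℝ] V)
    (hJ₁iso : ∀ X Y : V, ⟪J₁ X, J₁ Y⟫ = ⟪X, Y⟫)
    (hJ₂iso : ∀ X Y : V, ⟪J₂ X, J₂ Y⟫ = ⟪X, Y⟫)
    (hJ₃iso : ∀ X Y : V, ⟪J₃ X, J₃ Y⟫ = ⟪X, Y⟫)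
    (hJ₁sq : ∀ X : V, J₁ (J₁ X) = -X)
    (hJ₂sq : ∀ X : V, J₂ (J₂ X) = -X)
    (hJ₃sq : ∀ X : V, J₃ (J₃ X) = -X)
    (hJ₁₂ : ∀ X : V, J₁ (J₂ X) = J₃ X)
    (hJ₂₁ : ∀ X : V, J₂ (J₁ X) = -(J₃ X))
    (T : V →ₗ[ℝ] V →ₗ[ℝ] V →ₗ[ℝ] ℝ)
    (halt₁ : ∀ X Y Z : V, T X Y Z = -(T Y X Z))
    (halt₂ : ∀ X Y Z : V, T X Y Z = -(T X Z Y))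
    (htype₁ : ∀ X Y Z : V,
      T X Y Z - T (J₁ X) (J₁ Y) Z - T (J₁ X) Y (J₁ Z) - T X (J₁ Y) (J₁ Z) = 0)
    (htype₂ : ∀ X Y Z : V,
      T X Y Z - T (J₂ X) (J₂ Y) Z - T (J₂ X) Y (J₂ Z) - T X (J₂ Y) (J₂ Z) = 0)
    (htype₃ : ∀ X Y Z : V,
      T X Y Z - T (J₃ X) (J₃ Y) Z - T (J₃ X) Y (J₃ Z) - T X (J₃ Y) (J₃ Z) = 0)
    (hmix₁ : ∀ X Y Z : V,
      T (J₁ X) (J₁ Y) Z - T (J₃ X) (J₃ Y) Z - T (J₃ X) (J₁ Y) (J₂ Z) - T (J₁ X) (J₃ Y) (J₂ Z) = 0)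
    (hmix₂ : ∀ X Y Z : V,
      T (J₂ X) (J₂ Y) Z - T (J₁ X) (J₁ Y) Z - T (J₁ X) (J₂ Y) (J₃ Z) - T (J₂ X) (J₁ Y) (J₃ Z) = 0)
    (hmix₃ : ∀ X Y Z : V,
      T (J₃ X) (J₃ Y) Z - T (J₂ X) (J₂ Y) Z - T (J₂ X) (J₃ Y) (J₁ Z) - T (J₃ X) (J₂ Y) (J₁ Z) = 0)
    (e : OrthonormalBasis (Fin (4 * n)) ℝ V)
    (θ : V → ℝ)
    (hθ : ∀ X : V, θ X = -(1 / 2 : ℝ) * ∑ a, T (J₁ X) (e a) (J₁ (e a)))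
    (A : V → V → V → ℝ)
    (hA : ∀ X Y Z : V,
      2 * A X Y Z =
        -(T X (J₁ Y) (J₁ Z)) - T (J₁ X) (J₁ Y) Z - T X (J₃ Y) (J₃ Z) - T (J₁ X) (J₃ Y) (J₂ Z))
    (X : V) :
    ∑ a, A X (e a) (e a) = -2 * θ X := by
  classical
  -- J₂ is skew-adjoint
  have skew₂ : ∀ x y : V, ⟪x, J₂ y⟫ = -⟪y, J₂ x⟫ := by
    intro x y
    have h := hJ₂iso x (J₂ y)
    rw [hJ₂sq, inner_neg_right] at h
    rw [← h, real_inner_comm]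
  -- J₃ ∘ J₂ = -J₁
  have hJ₃₂ : ∀ x : V, J₃ (J₂ x) = -(J₁ x) := by
    intro x
    rw [← hJ₁₂ (J₂ x), hJ₂sq, map_neg]
  -- expanding a linear functional over the orthonormal basis
  have expand : ∀ (L : V →ₗ[ℝ] ℝ) (x : V), ∑ a, ⟪e a, x⟫ * L (e a) = L x := by
    intro L x
    conv_rhs => rw [← e.sum_repr' x]
    rw [map_sum]
    simp [smul_eq_mul]
  -- key trace identity
  have key : ∀ W : V, ∑ a, T W (J₃ (e a)) (J₂ (e a)) = -∑ a, T W (e a) (J₁ (e a)) := by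
    intro W
    have step1 : ∀ a, T W (J₃ (e a)) (J₂ (e a))
        = ∑ c, ⟪e c, J₂ (e a)⟫ * T W (J₃ (e a)) (e c) := by
      intro a
      conv_lhs => rw [← e.sum_repr' (J₂ (e a))]
      rw [map_sum]
      simp [smul_eq_mul]
    calc ∑ a, T W (J₃ (e a)) (J₂ (e a))
        = ∑ a, ∑ c, ⟪e c, J₂ (e a)⟫ * T W (J₃ (e a)) (e c) := by
          exact Finset.sum_congr rfl fun a _ => step1 a
      _ = ∑ c, ∑ a, ⟪e c, J₂ (e a)⟫ * T W (J₃ (e a)) (e c) := Finset.sum_comm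
      _ = ∑ c, -∑ a, ⟪e a, J₂ (e c)⟫ * T W (J₃ (e a)) (e c) := by
          refine Finset.sum_congr rfl fun c _ => ?_
          rw [← Finset.sum_neg_distrib]
          refine Finset.sum_congr rfl fun a _ => ?_
          rw [skew₂ (e c) (e a)]
          ring
      _ = ∑ c, -T W (J₃ (J₂ (e c))) (e c) := by
          refine Finset.sum_congr rfl fun c _ => ?_
          congr 1
          exact expand (((T W).flip (e c)).comp J₃) (J₂ (e c))
      _ = -∑ c, T W (e c) (J₁ (e c)) := by
          rw [← Finset.sum_neg_distrib]
          refine Finset.sum_congr rfl fun c _ => ?_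
          rw [hJ₃₂, map_neg]
          simp only [LinearMap.neg_apply]
          rw [halt₂ W (J₁ (e c)) (e c)]; ring
  -- T X y y = 0
  have tzero : ∀ (W y : V), T W y y = 0 := by
    intro W y
    have := halt₂ W y y
    linarith
  -- summand computation
  have hsummand : ∀ a, 2 * A X (e a) (e a)
      = T (J₁ X) (e a) (J₁ (e a)) - T (J₁ X) (J₃ (e a)) (J₂ (e a)) := by
    intro a
    rw [hA, tzero X (J₁ (e a)), tzero X (J₃ (e a)), halt₂ (J₁ X) (J₁ (e a)) (e a)]
    ring
  have h2 : 2 * ∑ a, A X (e a) (e a)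
      = 2 * ∑ a, T (J₁ X) (e a) (J₁ (e a)) := by
    rw [Finset.mul_sum]
    calc ∑ a, 2 * A X (e a) (e a)
        = ∑ a, (T (J₁ X) (e a) (J₁ (e a)) - T (J₁ X) (J₃ (e a)) (J₂ (e a))) :=
          Finset.sum_congr rfl fun a _ => hsummand a
      _ = ∑ a, T (J₁ X) (e a) (J₁ (e a)) - ∑ a, T (J₁ X) (J₃ (e a)) (J₂ (e a)) :=
          Finset.sum_sub_distrib _ _
      _ = 2 * ∑ a, T (J₁ X) (e a) (J₁ (e a)) := by
          rw [key (J₁ X)]; ring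
  have hθX := hθ X
  linarith
end

section
/- Let V be a real inner product space of dimension 4n with inner product g, equipped with a hyperhermitian structure (J₁,J₂,J₃). Let T be a 3-form on V which is of type (1,2)+(2,1) with respect to each of J₁, J₂, J₃ and satisfies the mixed type identity, let (e_a)_{a=1}^{4n} be an orthonormal basis of V, and let A be the difference tensor defined by 2A(X,Y,Z) = −T(X,J₁Y,J₁Z) − T(J₁X,J₁Y,Z) − T(X,J₃Y,J₃Z) − T(J₁X,J₃Y,J₂Z). Then for every X ∈ V, ∑_{a=1}^{4n} A(X,e_a,J₁e_a) = 0. -/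
open scoped RealInnerProductSpace

private lemma sum_bilin_helper
    {V : Type*} [NormedAddCommGroup V] [InnerProductSpace ℝ V]
    {ι : Type*} [Fintype ι] (e : OrthonormalBasis ι ℝ V)
    (B : V →ₗ[ℝ] V →ₗ[ℝ] ℝ) (P Q R : V →ₗ[ℝ] V)
    (h : ∀ b c : ι, (∑ a, ⟪e b, P (e a)⟫ * ⟪e c, Q (e a)⟫) = ⟪e b, R (e c)⟫) :
    ∑ a, B (P (e a)) (Q (e a)) = ∑ c, B (R (e c)) (e c) := by
  have expand : ∀ a, B (P (e a)) (Q (e a)) =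
      ∑ b, ∑ c, ⟪e b, P (e a)⟫ * ⟪e c, Q (e a)⟫ * B (e b) (e c) := by
    intro a
    conv_lhs => rw [← e.sum_repr' (P (e a)), ← e.sum_repr' (Q (e a))]
    simp only [map_sum, LinearMap.map_smul, LinearMap.coe_sum, Finset.sum_apply,
      LinearMap.smul_apply, smul_eq_mul]
    simp only [Finset.mul_sum]
    rw [Finset.sum_comm]
    exact Finset.sum_congr rfl fun b _ => Finset.sum_congr rfl fun c _ => by ring
  calc ∑ a, B (P (e a)) (Q (e a))
      = ∑ a, ∑ b, ∑ c, ⟪e b, P (e a)⟫ * ⟪e c, Q (e a)⟫ * B (e b) (e c) := by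
        exact Finset.sum_congr rfl fun a _ => expand a
    _ = ∑ b, ∑ c, (∑ a, ⟪e b, P (e a)⟫ * ⟪e c, Q (e a)⟫) * B (e b) (e c) := by
        rw [Finset.sum_comm]
        refine Finset.sum_congr rfl fun b _ => ?_
        rw [Finset.sum_comm]
        refine Finset.sum_congr rfl fun c _ => ?_
        rw [Finset.sum_mul]
    _ = ∑ c, ∑ b, ⟪e b, R (e c)⟫ * B (e b) (e c) := by
        rw [Finset.sum_comm]
        exact Finset.sum_congr rfl fun c _ => Finset.sum_congr rfl fun b _ => by rw [h]
    _ = ∑ c, B (R (e c)) (e c) := by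
        refine Finset.sum_congr rfl fun c _ => ?_
        conv_rhs => rw [← e.sum_repr' (R (e c))]
        rw [map_sum, LinearMap.coe_sum, Finset.sum_apply]
        refine Finset.sum_congr rfl fun b _ => ?_
        rw [LinearMap.map_smul]
        simp

theorem stmt_3
    {V : Type*} [NormedAddCommGroup V] [InnerProductSpace ℝ V]
    [FiniteDimensional ℝ V] {n : ℕ}
    (hdim : Module.finrank ℝ V = 4 * n)
    (J₁ J₂ J₃ : V →ₗ[ℝ] V)
    (hJ₁iso : ∀ X Y : V, ⟪J₁ X, J₁ Y⟫ = ⟪X, Y⟫)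
    (hJ₂iso : ∀ X Y : V, ⟪J₂ X, J₂ Y⟫ = ⟪X, Y⟫)
    (hJ₃iso : ∀ X Y : V, ⟪J₃ X, J₃ Y⟫ = ⟪X, Y⟫)
    (hJ₁sq : ∀ X : V, J₁ (J₁ X) = -X)
    (hJ₂sq : ∀ X : V, J₂ (J₂ X) = -X)
    (hJ₃sq : ∀ X : V, J₃ (J₃ X) = -X)
    (hJ₁₂ : ∀ X : V, J₁ (J₂ X) = J₃ X)
    (hJ₂₁ : ∀ X : V, J₂ (J₁ X) = -(J₃ X))
    (T : V →ₗ[ℝ] V →ₗ[ℝ] V →ₗ[ℝ] ℝ)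
    (halt₁ : ∀ X Y Z : V, T X Y Z = -(T Y X Z))
    (halt₂ : ∀ X Y Z : V, T X Y Z = -(T X Z Y))
    (htype₁ : ∀ X Y Z : V,
      T X Y Z - T (J₁ X) (J₁ Y) Z - T (J₁ X) Y (J₁ Z) - T X (J₁ Y) (J₁ Z) = 0)
    (htype₂ : ∀ X Y Z : V,
      T X Y Z - T (J₂ X) (J₂ Y) Z - T (J₂ X) Y (J₂ Z) - T X (J₂ Y) (J₂ Z) = 0)
    (htype₃ : ∀ X Y Z : V,
      T X Y Z - T (J₃ X) (J₃ Y) Z - T (J₃ X) Y (J₃ Z) - T X (J₃ Y) (J₃ Z) = 0)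
    (hmix₁ : ∀ X Y Z : V,
      T (J₁ X) (J₁ Y) Z - T (J₃ X) (J₃ Y) Z - T (J₃ X) (J₁ Y) (J₂ Z) - T (J₁ X) (J₃ Y) (J₂ Z) = 0)
    (hmix₂ : ∀ X Y Z : V,
      T (J₂ X) (J₂ Y) Z - T (J₁ X) (J₁ Y) Z - T (J₁ X) (J₂ Y) (J₃ Z) - T (J₂ X) (J₁ Y) (J₃ Z) = 0)
    (hmix₃ : ∀ X Y Z : V,
      T (J₃ X) (J₃ Y) Z - T (J₂ X) (J₂ Y) Z - T (J₂ X) (J₃ Y) (J₁ Z) - T (J₃ X) (J₂ Y) (J₁ Z) = 0)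
    (e : OrthonormalBasis (Fin (4 * n)) ℝ V)
    (A : V → V → V → ℝ)
    (hA : ∀ X Y Z : V,
      2 * A X Y Z =
        -(T X (J₁ Y) (J₁ Z)) - T (J₁ X) (J₁ Y) Z - T X (J₃ Y) (J₃ Z) - T (J₁ X) (J₃ Y) (J₂ Z))
    (X : V) :
    ∑ a, A X (e a) (J₁ (e a)) = 0 := by
  -- auxiliary products of complex structures
  have hJ₁₃ : ∀ Y : V, J₁ (J₃ Y) = -(J₂ Y) := by
    intro Y; rw [← hJ₁₂, hJ₁sq]
  have hJ₃₁ : ∀ Y : V, J₃ (J₁ Y) = J₂ Y := by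
    intro Y
    have := hJ₁₂ (J₁ Y)
    rw [← this, hJ₂₁, map_neg, hJ₁₃, neg_neg]
  have hJ₃₂ : ∀ Y : V, J₃ (J₂ Y) = -(J₁ Y) := by
    intro Y; rw [← hJ₁₂, hJ₂sq, map_neg]
  -- adjoint facts: ⟪u, J v⟫ = -⟪J u, v⟫
  have hadj : ∀ (J : V →ₗ[ℝ] V), (∀ X Y : V, ⟪J X, J Y⟫ = ⟪X, Y⟫) →
      (∀ X : V, J (J X) = -X) → ∀ u v : V, ⟪u, J v⟫ = -⟪J u, v⟫ := by
    intro J hiso hsq u v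
    have := hiso (J u) v
    rw [hsq] at this
    rw [← this, inner_neg_left, neg_neg]
  -- the key trace identity
  have key : ∑ a, T X (J₃ (e a)) (J₂ (e a)) = ∑ a, T X (J₁ (e a)) (e a) := by
    have := sum_bilin_helper e (T X) J₃ J₂ J₁ (fun b c => ?_)
    · simpa using this
    · have h1 : ∀ a, ⟪e b, J₃ (e a)⟫ = ⟪-(J₃ (e b)), e a⟫ := by
        intro a; rw [hadj J₃ hJ₃iso hJ₃sq, inner_neg_left]
      have h2 : ∀ a, ⟪e c, J₂ (e a)⟫ = ⟪e a, -(J₂ (e c))⟫ := by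
        intro a
        rw [hadj J₂ hJ₂iso hJ₂sq, inner_neg_right, real_inner_comm (J₂ (e c)) (e a)]
      calc (∑ a, ⟪e b, J₃ (e a)⟫ * ⟪e c, J₂ (e a)⟫)
          = ∑ a, ⟪-(J₃ (e b)), e a⟫ * ⟪e a, -(J₂ (e c))⟫ := by
            exact Finset.sum_congr rfl fun a _ => by rw [h1, h2]
        _ = ⟪-(J₃ (e b)), -(J₂ (e c))⟫ := e.sum_inner_mul_inner _ _
        _ = ⟪J₃ (e b), J₂ (e c)⟫ := by rw [inner_neg_neg]
        _ = ⟪e b, J₁ (e c)⟫ := by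
            have := hJ₃iso (e b) (J₁ (e c))
            rw [hJ₃₁] at this
            exact this
  -- pointwise reduction of 2 * A X (e a) (J₁ (e a))
  have red : ∀ a, 2 * A X (e a) (J₁ (e a)) =
      -(T X (e a) (J₁ (e a))) - T X (J₃ (e a)) (J₂ (e a)) := by
    intro a
    have h := hA X (e a) (J₁ (e a))
    rw [hJ₁sq, hJ₃₁, hJ₂₁] at h
    have e1 : T X (J₁ (e a)) (-(e a)) = T X (e a) (J₁ (e a)) := by
      rw [map_neg, halt₂ X (J₁ (e a)) (e a), neg_neg]
    have e2 : T (J₁ X) (J₁ (e a)) (J₁ (e a)) = 0 := by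
      have := halt₂ (J₁ X) (J₁ (e a)) (J₁ (e a)); linarith
    have e3 : T (J₁ X) (J₃ (e a)) (-(J₃ (e a))) = 0 := by
      rw [map_neg]
      have := halt₂ (J₁ X) (J₃ (e a)) (J₃ (e a)); linarith
    rw [e1, e2, e3] at h
    linarith
  have sum2 : ∑ a, 2 * A X (e a) (J₁ (e a)) = 0 := by
    calc ∑ a, 2 * A X (e a) (J₁ (e a))
        = ∑ a, (-(T X (e a) (J₁ (e a))) - T X (J₃ (e a)) (J₂ (e a))) :=
          Finset.sum_congr rfl fun a _ => red a
      _ = -(∑ a, T X (e a) (J₁ (e a))) - ∑ a, T X (J₃ (e a)) (J₂ (e a)) := by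
          rw [Finset.sum_sub_distrib, ← Finset.sum_neg_distrib]
      _ = 0 := by
          rw [key]
          have : ∑ a, T X (J₁ (e a)) (e a) = -∑ a, T X (e a) (J₁ (e a)) := by
            rw [← Finset.sum_neg_distrib]
            exact Finset.sum_congr rfl fun a _ => halt₂ X (J₁ (e a)) (e a)
          rw [this]; ring
  rw [← Finset.mul_sum] at sum2
  linarith
end

section
/- Let V be a real inner product space of dimension 4n with inner product g, equipped with a hyperhermitian structure (J₁,J₂,J₃). Let T be a 3-form on V which is of type (1,2)+(2,1) with respect to each of J₁, J₂, J₃ and satisfies the mixed type identity, let (e_a)_{a=1}^{4n} be an orthonormal basis of V, and let A be the difference tensor defined by 2A(X,Y,Z) = −T(X,J₁Y,J₁Z) − T(J₁X,J₁Y,Z) − T(X,J₃Y,J₃Z) − T(J₁X,J₃Y,J₂Z). Then for every X ∈ V, ∑_{a=1}^{4n} A(X,e_a,J₂e_a) = 0. -/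
open scoped RealInnerProductSpace

lemma tr_inv {V : Type*} [NormedAddCommGroup V] [InnerProductSpace ℝ V]
    {ι : Type*} [Fintype ι] [DecidableEq ι] (e f : OrthonormalBasis ι ℝ V)
    (B : V →ₗ[ℝ] V →ₗ[ℝ] ℝ) :
    ∑ a, B (e a) (e a) = ∑ a, B (f a) (f a) := by
  have expand : ∀ a, B (e a) (e a)
      = ∑ b, ∑ c, ⟪f b, e a⟫ * ⟪f c, e a⟫ * B (f b) (f c) := by
    intro a
    conv_lhs => rw [← f.sum_repr' (e a)]
    simp only [map_sum, map_smul, LinearMap.smul_apply, LinearMap.sum_apply,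
      Finset.sum_apply', smul_eq_mul, Finset.mul_sum]
    rw [Finset.sum_comm]
    exact Finset.sum_congr rfl fun b _ => Finset.sum_congr rfl fun c _ => by ring
  rw [Finset.sum_congr rfl fun a _ => expand a]
  rw [Finset.sum_comm]
  have step : ∀ b, ∑ a, ∑ c, ⟪f b, e a⟫ * ⟪f c, e a⟫ * B (f b) (f c)
      = ∑ c, (∑ a, ⟪f b, e a⟫ * ⟪e a, f c⟫) * B (f b) (f c) := by
    intro b
    rw [Finset.sum_comm]
    refine Finset.sum_congr rfl fun c _ => ?_
    rw [Finset.sum_mul]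
    refine Finset.sum_congr rfl fun a _ => ?_
    rw [real_inner_comm (e a) (f c)]
  rw [Finset.sum_congr rfl fun b _ => step b]
  refine Finset.sum_congr rfl fun b _ => ?_
  have h2 : ∀ c, (∑ a, ⟪f b, e a⟫ * ⟪e a, f c⟫) = ⟪f b, f c⟫ := fun c =>
    e.sum_inner_mul_inner (f b) (f c)
  rw [Finset.sum_congr rfl fun c _ => congrArg (· * B (f b) (f c)) (h2 c)]
  have horth := f.orthonormal
  rw [orthonormal_iff_ite] at horth
  simp only [horth]
  simp [Finset.sum_ite_eq' Finset.univ b]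

theorem stmt_4
    {V : Type*} [NormedAddCommGroup V] [InnerProductSpace ℝ V]
    [FiniteDimensional ℝ V] {n : ℕ}
    (hdim : Module.finrank ℝ V = 4 * n)
    (J₁ J₂ J₃ : V →ₗ[ℝ] V)
    (hJ₁iso : ∀ X Y : V, ⟪J₁ X, J₁ Y⟫ = ⟪X, Y⟫)
    (hJ₂iso : ∀ X Y : V, ⟪J₂ X, J₂ Y⟫ = ⟪X, Y⟫)
    (hJ₃iso : ∀ X Y : V, ⟪J₃ X, J₃ Y⟫ = ⟪X, Y⟫)
    (hJ₁sq : ∀ X : V, J₁ (J₁ X) = -X)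
    (hJ₂sq : ∀ X : V, J₂ (J₂ X) = -X)
    (hJ₃sq : ∀ X : V, J₃ (J₃ X) = -X)
    (hJ₁₂ : ∀ X : V, J₁ (J₂ X) = J₃ X)
    (hJ₂₁ : ∀ X : V, J₂ (J₁ X) = -(J₃ X))
    (T : V →ₗ[ℝ] V →ₗ[ℝ] V →ₗ[ℝ] ℝ)
    (halt₁ : ∀ X Y Z : V, T X Y Z = -(T Y X Z))
    (halt₂ : ∀ X Y Z : V, T X Y Z = -(T X Z Y))
    (htype₁ : ∀ X Y Z : V,
      T X Y Z - T (J₁ X) (J₁ Y) Z - T (J₁ X) Y (J₁ Z) - T X (J₁ Y) (J₁ Z) = 0)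
    (htype₂ : ∀ X Y Z : V,
      T X Y Z - T (J₂ X) (J₂ Y) Z - T (J₂ X) Y (J₂ Z) - T X (J₂ Y) (J₂ Z) = 0)
    (htype₃ : ∀ X Y Z : V,
      T X Y Z - T (J₃ X) (J₃ Y) Z - T (J₃ X) Y (J₃ Z) - T X (J₃ Y) (J₃ Z) = 0)
    (hmix₁ : ∀ X Y Z : V,
      T (J₁ X) (J₁ Y) Z - T (J₃ X) (J₃ Y) Z - T (J₃ X) (J₁ Y) (J₂ Z) - T (J₁ X) (J₃ Y) (J₂ Z) = 0)
    (hmix₂ : ∀ X Y Z : V,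
      T (J₂ X) (J₂ Y) Z - T (J₁ X) (J₁ Y) Z - T (J₁ X) (J₂ Y) (J₃ Z) - T (J₂ X) (J₁ Y) (J₃ Z) = 0)
    (hmix₃ : ∀ X Y Z : V,
      T (J₃ X) (J₃ Y) Z - T (J₂ X) (J₂ Y) Z - T (J₂ X) (J₃ Y) (J₁ Z) - T (J₃ X) (J₂ Y) (J₁ Z) = 0)
    (e : OrthonormalBasis (Fin (4 * n)) ℝ V)
    (A : V → V → V → ℝ)
    (hA : ∀ X Y Z : V,
      2 * A X Y Z =
        -(T X (J₁ Y) (J₁ Z)) - T (J₁ X) (J₁ Y) Z - T X (J₃ Y) (J₃ Z) - T (J₁ X) (J₃ Y) (J₂ Z))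
    (X : V) :
    ∑ a, A X (e a) (J₂ (e a)) = 0 := by
  -- basic consequences
  have hself : ∀ u v : V, T u v v = 0 := fun u v => by
    have := halt₂ u v v; linarith
  have hJ₃₂ : ∀ x : V, J₃ (J₂ x) = -(J₁ x) := fun x => by
    have h := hJ₁₂ (J₂ x)
    rw [hJ₂sq, map_neg] at h
    exact h.symm
  -- T(J₁X, J₁Y, J₂Y) = 0 pointwise, from the mixed identity
  have hzero : ∀ Y : V, T (J₁ X) (J₁ Y) (J₂ Y) = 0 := by
    intro Y
    have hm := hmix₂ X Y (J₂ Y)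
    rw [hJ₃₂] at hm
    have h1 : T (J₂ X) (J₂ Y) (J₂ Y) = 0 := hself _ _
    have h2 : T (J₁ X) (J₂ Y) (-(J₁ Y)) = -(T (J₁ X) (J₂ Y) (J₁ Y)) := map_neg _ _
    have h2' := halt₂ (J₁ X) (J₂ Y) (J₁ Y)
    have h3 : T (J₂ X) (J₁ Y) (-(J₁ Y)) = -(T (J₂ X) (J₁ Y) (J₁ Y)) := map_neg _ _
    have h3' : T (J₂ X) (J₁ Y) (J₁ Y) = 0 := hself _ _
    linarith
  have hzero' : ∀ Y : V, T (J₁ X) Y (J₃ Y) = 0 := by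
    intro Y
    have h := hzero (J₁ Y)
    rw [hJ₁sq, hJ₂₁] at h
    simpa using h
  have hzero'' : ∀ Y : V, T (J₁ X) (J₃ Y) Y = 0 := by
    intro Y
    have h := halt₂ (J₁ X) (J₃ Y) Y
    have h' := hzero' Y
    linarith
  -- T(X, Y, J₂Y) = T(X, J₁Y, J₃Y) pointwise, from the type identity
  have hUS : ∀ Y : V, T X Y (J₂ Y) = T X (J₁ Y) (J₃ Y) := by
    intro Y
    have ht := htype₁ X Y (J₂ Y)
    rw [hJ₁₂] at ht
    have h1 := hzero Y
    have h2 := hzero' Y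
    linarith
  -- the difference tensor evaluated on (X, Y, J₂Y)
  have h2A : ∀ Y : V, 2 * A X Y (J₂ Y) = (-2) * T X Y (J₂ Y) := by
    intro Y
    have h := hA X Y (J₂ Y)
    rw [hJ₁₂, hJ₃₂, hJ₂sq] at h
    have h1 : T X (J₃ Y) (-(J₁ Y)) = -(T X (J₃ Y) (J₁ Y)) := map_neg _ _
    have h1' := halt₂ X (J₃ Y) (J₁ Y)
    have h2 : T (J₁ X) (J₃ Y) (-Y) = -(T (J₁ X) (J₃ Y) Y) := map_neg _ _
    have h3 := hzero Y
    have h4 := hzero'' Y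
    have h5 := hUS Y
    linarith
  -- the orthonormal basis J₁ ∘ e
  have hinj : Function.Injective J₁ := fun x y h => by
    have h' := congrArg J₁ h
    rw [hJ₁sq, hJ₁sq] at h'
    simpa using h'
  have hsurj : Function.Surjective J₁ := fun y =>
    ⟨-(J₁ y), by rw [map_neg, hJ₁sq, neg_neg]⟩
  have hnorm : ∀ x : V, ‖J₁ x‖ = ‖x‖ := by
    intro x
    have h := hJ₁iso x x
    rw [real_inner_self_eq_norm_mul_norm, real_inner_self_eq_norm_mul_norm] at h
    rcases mul_self_eq_mul_self_iff.mp h with h' | h'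
    · exact h'
    · have := norm_nonneg (J₁ x); have := norm_nonneg x; linarith
  let E : V ≃ₗᵢ[ℝ] V :=
    { toLinearEquiv := LinearEquiv.ofBijective J₁ ⟨hinj, hsurj⟩
      norm_map' := hnorm }
  let f : OrthonormalBasis (Fin (4 * n)) ℝ V := e.map E
  have hf : ∀ a, f a = J₁ (e a) := fun a => e.map_apply E a
  -- the trace identity
  have key := tr_inv e f ((T X).compl₂ J₂)
  simp only [LinearMap.compl₂_apply, hf] at key
  have rhs : ∀ a, T X (J₁ (e a)) (J₂ (J₁ (e a))) = -(T X (e a) (J₂ (e a))) := by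
    intro a
    rw [hJ₂₁, map_neg, ← hUS (e a)]
  rw [Finset.sum_congr rfl fun a _ => rhs a, Finset.sum_neg_distrib] at key
  have hU0 : ∑ a, T X (e a) (J₂ (e a)) = 0 := by linarith
  -- conclude
  have hfinal : 2 * ∑ a, A X (e a) (J₂ (e a)) = 0 := by
    rw [Finset.mul_sum, Finset.sum_congr rfl fun a _ => h2A (e a), ← Finset.mul_sum, hU0]
    ring
  linarith
end

section
/- Let V be a real inner product space of dimension 4n with inner product g, equipped with a hyperhermitian structure (J₁,J₂,J₃). Let T be a 3-form on V which is of type (1,2)+(2,1) with respect to each of J₁, J₂, J₃ and satisfies the mixed type identity, let (e_a)_{a=1}^{4n} be an orthonormal basis of V, and let A be the difference tensor defined by 2A(X,Y,Z) = −T(X,J₁Y,J₁Z) − T(J₁X,J₁Y,Z) − T(X,J₃Y,J₃Z) − T(J₁X,J₃Y,J₂Z). Then for every X ∈ V, ∑_{a=1}^{4n} A(X,e_a,J₃e_a) = 0. -/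
open scoped RealInnerProductSpace

lemma onb_biform_sum_eq {V : Type*} [NormedAddCommGroup V] [InnerProductSpace ℝ V]
    {ι : Type*} [Fintype ι]
    (e f : OrthonormalBasis ι ℝ V) (B : V →ₗ[ℝ] V →ₗ[ℝ] ℝ) :
    ∑ a, B (f a) (f a) = ∑ a, B (e a) (e a) := by
  classical
  have h : ∀ a, B (f a) (f a) = ∑ b, ∑ c, ⟪e b, f a⟫ * ⟪f a, e c⟫ * B (e c) (e b) := by
    intro a
    conv_lhs => rw [← e.sum_repr' (f a)]
    simp [map_sum, Finset.mul_sum, smul_eq_mul]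
    congr 1; ext b; congr 1; ext c
    rw [real_inner_comm (e c) (f a)]; ring
  simp_rw [h]
  rw [Finset.sum_comm]
  have : ∀ b, ∑ a, ∑ c, ⟪e b, f a⟫ * ⟪f a, e c⟫ * B (e c) (e b)
      = ∑ c, ⟪e b, e c⟫ * B (e c) (e b) := by
    intro b
    rw [Finset.sum_comm]
    congr 1; ext c
    rw [← Finset.sum_mul]
    rw [f.sum_inner_mul_inner]
  simp_rw [this]
  have horth := orthonormal_iff_ite.mp e.orthonormal
  congr 1; ext b
  rw [Finset.sum_eq_single b]
  · rw [horth b b]; simp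
  · intro c _ hc; rw [horth b c]; simp [Ne.symm hc]
  · intro h; simp at h

theorem stmt_5
    {V : Type*} [NormedAddCommGroup V] [InnerProductSpace ℝ V]
    [FiniteDimensional ℝ V] {n : ℕ}
    (hdim : Module.finrank ℝ V = 4 * n)
    (J₁ J₂ J₃ : V →ₗ[ℝ] V)
    (hJ₁iso : ∀ X Y : V, ⟪J₁ X, J₁ Y⟫ = ⟪X, Y⟫)
    (hJ₂iso : ∀ X Y : V, ⟪J₂ X, J₂ Y⟫ = ⟪X, Y⟫)
    (hJ₃iso : ∀ X Y : V, ⟪J₃ X, J₃ Y⟫ = ⟪X, Y⟫)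
    (hJ₁sq : ∀ X : V, J₁ (J₁ X) = -X)
    (hJ₂sq : ∀ X : V, J₂ (J₂ X) = -X)
    (hJ₃sq : ∀ X : V, J₃ (J₃ X) = -X)
    (hJ₁₂ : ∀ X : V, J₁ (J₂ X) = J₃ X)
    (hJ₂₁ : ∀ X : V, J₂ (J₁ X) = -(J₃ X))
    (T : V →ₗ[ℝ] V →ₗ[ℝ] V →ₗ[ℝ] ℝ)
    (halt₁ : ∀ X Y Z : V, T X Y Z = -(T Y X Z))
    (halt₂ : ∀ X Y Z : V, T X Y Z = -(T X Z Y))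
    (htype₁ : ∀ X Y Z : V,
      T X Y Z - T (J₁ X) (J₁ Y) Z - T (J₁ X) Y (J₁ Z) - T X (J₁ Y) (J₁ Z) = 0)
    (htype₂ : ∀ X Y Z : V,
      T X Y Z - T (J₂ X) (J₂ Y) Z - T (J₂ X) Y (J₂ Z) - T X (J₂ Y) (J₂ Z) = 0)
    (htype₃ : ∀ X Y Z : V,
      T X Y Z - T (J₃ X) (J₃ Y) Z - T (J₃ X) Y (J₃ Z) - T X (J₃ Y) (J₃ Z) = 0)
    (hmix₁ : ∀ X Y Z : V,
      T (J₁ X) (J₁ Y) Z - T (J₃ X) (J₃ Y) Z - T (J₃ X) (J₁ Y) (J₂ Z) - T (J₁ X) (J₃ Y) (J₂ Z) = 0)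
    (hmix₂ : ∀ X Y Z : V,
      T (J₂ X) (J₂ Y) Z - T (J₁ X) (J₁ Y) Z - T (J₁ X) (J₂ Y) (J₃ Z) - T (J₂ X) (J₁ Y) (J₃ Z) = 0)
    (hmix₃ : ∀ X Y Z : V,
      T (J₃ X) (J₃ Y) Z - T (J₂ X) (J₂ Y) Z - T (J₂ X) (J₃ Y) (J₁ Z) - T (J₃ X) (J₂ Y) (J₁ Z) = 0)
    (e : OrthonormalBasis (Fin (4 * n)) ℝ V)
    (A : V → V → V → ℝ)
    (hA : ∀ X Y Z : V,
      2 * A X Y Z =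
        -(T X (J₁ Y) (J₁ Z)) - T (J₁ X) (J₁ Y) Z - T X (J₃ Y) (J₃ Z) - T (J₁ X) (J₃ Y) (J₂ Z))
    (X : V) :
    ∑ a, A X (e a) (J₃ (e a)) = 0 := by
  -- algebraic consequences of the quaternion relations
  have hJ₁₃ : ∀ Y : V, J₁ (J₃ Y) = -(J₂ Y) := by
    intro Y; rw [← hJ₁₂ Y, hJ₁sq]
  have hJ₃₂ : ∀ Y : V, J₃ (J₂ Y) = -(J₁ Y) := by
    intro Y; rw [← hJ₁₂ (J₂ Y), hJ₂sq, map_neg]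
  have hJ₂₃ : ∀ Y : V, J₂ (J₃ Y) = J₁ Y := by
    intro Y; rw [← hJ₁₂ Y, hJ₂₁ (J₂ Y), hJ₃₂, neg_neg]
  -- pointwise simplification of 2 * A X Y (J₃ Y)
  have key : ∀ Y : V, 2 * A X Y (J₃ Y) = T X (J₁ Y) (J₂ Y) - T X Y (J₃ Y) := by
    intro Y
    have := hA X Y (J₃ Y)
    rw [hJ₁₃ Y, hJ₃sq Y, hJ₂₃ Y] at this
    have h1 : T (J₁ X) (J₃ Y) (J₁ Y) = -(T (J₁ X) (J₁ Y) (J₃ Y)) := halt₂ _ _ _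
    have h2 : T X (J₃ Y) Y = -(T X Y (J₃ Y)) := halt₂ _ _ _
    simp only [map_neg, LinearMap.neg_apply] at this
    rw [this, h1, h2]; ring
  -- sum it up
  have hsum : 2 * ∑ a, A X (e a) (J₃ (e a))
      = (∑ a, T X (J₁ (e a)) (J₂ (e a))) - ∑ a, T X (e a) (J₃ (e a)) := by
    rw [Finset.mul_sum, ← Finset.sum_sub_distrib]
    exact Finset.sum_congr rfl fun a _ => key (e a)
  -- the bilinear form B Y Z = T X Y (J₃ Z)
  set B : V →ₗ[ℝ] V →ₗ[ℝ] ℝ :=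
    { toFun := fun Y => (T X Y).comp J₃
      map_add' := by intro Y Z; ext W; simp
      map_smul' := by intro c Y; ext W; simp } with hB
  -- J₂ as a linear isometry equivalence
  have hJ₂bij : Function.Bijective J₂ := by
    constructor
    · intro a b hab
      have := congrArg J₂ hab
      rw [hJ₂sq, hJ₂sq] at this
      exact neg_injective this
    · intro y; exact ⟨-(J₂ y), by rw [map_neg, hJ₂sq, neg_neg]⟩
  let J₂eq : V ≃ₗ[ℝ] V := LinearEquiv.ofBijective J₂ hJ₂bij
  let J₂iso : V ≃ₗᵢ[ℝ] V := J₂eq.isometryOfInner (fun x y => hJ₂iso x y)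
  let f : OrthonormalBasis (Fin (4 * n)) ℝ V := e.map J₂iso
  have hf : ∀ a, f a = J₂ (e a) := fun a => rfl
  have hBf : ∀ a, B (f a) (f a) = T X (J₁ (e a)) (J₂ (e a)) := by
    intro a
    rw [hf a]
    show T X (J₂ (e a)) (J₃ (J₂ (e a))) = _
    rw [hJ₃₂ (e a), halt₂ X (J₂ (e a)) (-(J₁ (e a)))]
    simp
  have hBe : ∀ a, B (e a) (e a) = T X (e a) (J₃ (e a)) := fun a => rfl
  have heq : (∑ a, T X (J₁ (e a)) (J₂ (e a))) = ∑ a, T X (e a) (J₃ (e a)) := by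
    calc (∑ a, T X (J₁ (e a)) (J₂ (e a))) = ∑ a, B (f a) (f a) := by
          exact Finset.sum_congr rfl fun a _ => (hBf a).symm
      _ = ∑ a, B (e a) (e a) := onb_biform_sum_eq e f B
      _ = ∑ a, T X (e a) (J₃ (e a)) := rfl
  rw [heq, sub_self] at hsum
  linarith
end

section
/- Let V be a real inner product space of dimension 4n with inner product g, equipped with a hyperhermitian structure (J₁,J₂,J₃). Let T be a 3-form on V which is of type (1,2)+(2,1) with respect to each of J₁, J₂, J₃ and satisfies the mixed type identity, and let A be the difference tensor defined by 2A(X,Y,Z) = −T(X,J₁Y,J₁Z) − T(J₁X,J₁Y,Z) − T(X,J₃Y,J₃Z) − T(J₁X,J₃Y,J₂Z). Then for every s ∈ {1,2,3} and all X,Y,Z ∈ V, A(X,J_sY,J_sZ) = A(X,Y,Z). -/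
open scoped RealInnerProductSpace

theorem stmt_6
    {V : Type*} [NormedAddCommGroup V] [InnerProductSpace ℝ V]
    [FiniteDimensional ℝ V] {n : ℕ}
    (hdim : Module.finrank ℝ V = 4 * n)
    (J₁ J₂ J₃ : V →ₗ[ℝ] V)
    (hJ₁iso : ∀ X Y : V, ⟪J₁ X, J₁ Y⟫ = ⟪X, Y⟫)
    (hJ₂iso : ∀ X Y : V, ⟪J₂ X, J₂ Y⟫ = ⟪X, Y⟫)
    (hJ₃iso : ∀ X Y : V, ⟪J₃ X, J₃ Y⟫ = ⟪X, Y⟫)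
    (hJ₁sq : ∀ X : V, J₁ (J₁ X) = -X)
    (hJ₂sq : ∀ X : V, J₂ (J₂ X) = -X)
    (hJ₃sq : ∀ X : V, J₃ (J₃ X) = -X)
    (hJ₁₂ : ∀ X : V, J₁ (J₂ X) = J₃ X)
    (hJ₂₁ : ∀ X : V, J₂ (J₁ X) = -(J₃ X))
    (T : V →ₗ[ℝ] V →ₗ[ℝ] V →ₗ[ℝ] ℝ)
    (halt₁ : ∀ X Y Z : V, T X Y Z = -(T Y X Z))
    (halt₂ : ∀ X Y Z : V, T X Y Z = -(T X Z Y))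
    (htype₁ : ∀ X Y Z : V,
      T X Y Z - T (J₁ X) (J₁ Y) Z - T (J₁ X) Y (J₁ Z) - T X (J₁ Y) (J₁ Z) = 0)
    (htype₂ : ∀ X Y Z : V,
      T X Y Z - T (J₂ X) (J₂ Y) Z - T (J₂ X) Y (J₂ Z) - T X (J₂ Y) (J₂ Z) = 0)
    (htype₃ : ∀ X Y Z : V,
      T X Y Z - T (J₃ X) (J₃ Y) Z - T (J₃ X) Y (J₃ Z) - T X (J₃ Y) (J₃ Z) = 0)
    (hmix₁ : ∀ X Y Z : V,
      T (J₁ X) (J₁ Y) Z - T (J₃ X) (J₃ Y) Z - T (J₃ X) (J₁ Y) (J₂ Z) - T (J₁ X) (J₃ Y) (J₂ Z) = 0)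
    (hmix₂ : ∀ X Y Z : V,
      T (J₂ X) (J₂ Y) Z - T (J₁ X) (J₁ Y) Z - T (J₁ X) (J₂ Y) (J₃ Z) - T (J₂ X) (J₁ Y) (J₃ Z) = 0)
    (hmix₃ : ∀ X Y Z : V,
      T (J₃ X) (J₃ Y) Z - T (J₂ X) (J₂ Y) Z - T (J₂ X) (J₃ Y) (J₁ Z) - T (J₃ X) (J₂ Y) (J₁ Z) = 0)
    (A : V → V → V → ℝ)
    (hA : ∀ X Y Z : V,
      2 * A X Y Z =
        -(T X (J₁ Y) (J₁ Z)) - T (J₁ X) (J₁ Y) Z - T X (J₃ Y) (J₃ Z) - T (J₁ X) (J₃ Y) (J₂ Z))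
    : ∀ X Y Z : V,
      A X (J₁ Y) (J₁ Z) = A X Y Z ∧
      A X (J₂ Y) (J₂ Z) = A X Y Z ∧
      A X (J₃ Y) (J₃ Z) = A X Y Z := by
  -- remaining quaternionic products
  have hJ₁₃ : ∀ X : V, J₁ (J₃ X) = -(J₂ X) := by
    intro X; rw [← hJ₁₂ X, hJ₁sq]
  have hJ₃₁ : ∀ X : V, J₃ (J₁ X) = J₂ X := by
    intro X
    have := congrArg J₁ (hJ₂₁ X)
    rw [hJ₁₂, map_neg, hJ₁₃] at this
    rw [← neg_neg (J₂ X), ← this]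
  have hJ₃₂ : ∀ X : V, J₃ (J₂ X) = -(J₁ X) := by
    intro X; rw [← hJ₁₂ (J₂ X), hJ₂sq, map_neg]
  have hJ₂₃ : ∀ X : V, J₂ (J₃ X) = J₁ X := by
    intro X; rw [← hJ₁₂ X, hJ₂₁, hJ₃₂, neg_neg]
  intro X Y Z
  have h0 := hA X Y Z
  refine ⟨?_, ?_, ?_⟩
  · have h2 := hA X (J₁ Y) (J₁ Z)
    have h3 := htype₁ X Y Z
    have h4 := htype₁ X (J₂ Y) (J₂ Z)
    simp only [hJ₁sq, hJ₂₁, hJ₃₁, hJ₁₂, hJ₃₂, map_neg, LinearMap.neg_apply, LinearMap.map_neg]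
      at h2 h4
    linarith
  · have h2 := hA X (J₂ Y) (J₂ Z)
    simp only [hJ₂sq, hJ₁₂, hJ₃₂, map_neg, LinearMap.neg_apply, LinearMap.map_neg] at h2
    linarith
  · have h2 := hA X (J₃ Y) (J₃ Z)
    have h3 := htype₁ X Y Z
    have h4 := htype₁ X (J₂ Y) (J₂ Z)
    simp only [hJ₃sq, hJ₁₃, hJ₂₃, hJ₁₂, hJ₃₂, map_neg, LinearMap.neg_apply, LinearMap.map_neg]
      at h2 h4
    linarith
end

section
/- Let V be a finite-dimensional real inner product space, let J be a linear isometry of V with J∘J = −id, and let A : V×V×V → ℝ be a trilinear form satisfying A(X,JY,JZ) = A(X,Y,Z) for all X,Y,Z. Then for every orthonormal basis (e_a) of V and all X,Y ∈ V, ∑_{a,b} ( A(X,e_b,Je_a)·A(Y,e_a,e_b) − A(Y,e_b,Je_a)·A(X,e_a,e_b) ) = 0. -/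
open scoped RealInnerProductSpace

theorem stmt_7
    {V : Type*} [NormedAddCommGroup V] [InnerProductSpace ℝ V]
    [FiniteDimensional ℝ V]
    (J : V →ₗ[ℝ] V)
    (hJiso : ∀ X Y : V, ⟪J X, J Y⟫ = ⟪X, Y⟫)
    (hJsq : ∀ X : V, J (J X) = -X)
    (A : V →ₗ[ℝ] V →ₗ[ℝ] V →ₗ[ℝ] ℝ)
    (hA : ∀ X Y Z : V, A X (J Y) (J Z) = A X Y Z)
    {ι : Type*} [Fintype ι]
    (e : OrthonormalBasis ι ℝ V) (X Y : V) :
    ∑ a, ∑ b,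
      (A X (e b) (J (e a)) * A Y (e a) (e b) - A Y (e b) (J (e a)) * A X (e a) (e b)) = 0 := by
  -- J is skew-adjoint
  have hskew : ∀ u v : V, ⟪J u, v⟫ = -⟪u, J v⟫ := by
    intro u v
    have h := hJiso u (J v)
    rw [hJsq, inner_neg_right] at h
    linarith
  -- moving J across the last two slots of A gives a sign
  have h1 : ∀ u v w : V, A u (J v) w = -A u v (J w) := by
    intro u v w
    have h := hA u v (-J w)
    simp only [map_neg, hJsq, neg_neg] at h
    rw [h]
  -- expansion of a linear functional in the orthonormal basis
  have expand : ∀ (f : V →ₗ[ℝ] ℝ) (x : V), f x = ∑ c, ⟪e c, x⟫ * f (e c) := by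
    intro f x
    conv_lhs => rw [← e.sum_repr x]
    rw [map_sum]
    refine Finset.sum_congr rfl fun c _ => ?_
    rw [map_smul, OrthonormalBasis.repr_apply_apply, smul_eq_mul]
  -- skew trace swap for two linear functionals
  have tswap : ∀ f g : V →ₗ[ℝ] ℝ,
      ∑ a, f (J (e a)) * g (e a) = -∑ a, f (e a) * g (J (e a)) := by
    intro f g
    have L : ∑ a, f (J (e a)) * g (e a)
        = ∑ a, ∑ c, ⟪e c, J (e a)⟫ * f (e c) * g (e a) := by
      refine Finset.sum_congr rfl fun a _ => ?_
      rw [expand f (J (e a)), Finset.sum_mul]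
    have R : ∑ a, f (e a) * g (J (e a))
        = ∑ a, ∑ c, ⟪e c, J (e a)⟫ * f (e a) * g (e c) := by
      refine Finset.sum_congr rfl fun a _ => ?_
      rw [expand g (J (e a)), Finset.mul_sum]
      refine Finset.sum_congr rfl fun c _ => ?_
      ring
    rw [L, R, Finset.sum_comm, ← Finset.sum_neg_distrib]
    refine Finset.sum_congr rfl fun a _ => ?_
    rw [← Finset.sum_neg_distrib]
    refine Finset.sum_congr rfl fun c _ => ?_
    have hs : ⟪e a, J (e c)⟫ = -⟪e c, J (e a)⟫ := by
      have h2 := hskew (e a) (e c)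
      have h3 := real_inner_comm (J (e a)) (e c)
      linarith
    rw [hs]; ring
  have key : ∑ a, ∑ b, A X (e b) (J (e a)) * A Y (e a) (e b)
      = ∑ a, ∑ b, A Y (e b) (J (e a)) * A X (e a) (e b) := by
    rw [Finset.sum_comm]
    have step : ∀ b, ∑ a, A X (e b) (J (e a)) * A Y (e a) (e b)
        = ∑ a, A X (e b) (e a) * A Y (e a) (J (e b)) := by
      intro b
      have t := tswap (A X (e b)) ((A Y).flip (e b))
      simp only [LinearMap.flip_apply] at t
      rw [t, ← Finset.sum_neg_distrib]
      refine Finset.sum_congr rfl fun a _ => ?_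
      rw [h1 Y (e a) (e b)]
      ring
    calc ∑ b, ∑ a, A X (e b) (J (e a)) * A Y (e a) (e b)
        = ∑ b, ∑ a, A X (e b) (e a) * A Y (e a) (J (e b)) := by
          exact Finset.sum_congr rfl fun b _ => step b
      _ = ∑ a, ∑ b, A Y (e b) (J (e a)) * A X (e a) (e b) := by
          refine Finset.sum_congr rfl fun i _ => Finset.sum_congr rfl fun j _ => ?_
          ring
  simp only [Finset.sum_sub_distrib]
  rw [key, sub_self]
end

section
/- Let V be a real inner product space of dimension 4n with inner product g, equipped with a hyperhermitian structure (J₁,J₂,J₃). Let R : V×V×V×V → ℝ be a quadrilinear form satisfying: (i) R(X,Y,Z,U) = −R(Y,X,Z,U); (ii) the first Bianchi identity R(X,Y,Z,U) + R(Y,Z,X,U) + R(Z,X,Y,U) = 0; (iii) R(X,Y,J_sZ,J_sU) = R(X,Y,Z,U) for s = 1,2,3 (i.e. the curvature commutes with each J_s). For an orthonormal basis (e_a)_{a=1}^{4n}, define Ric(X,Y) = ∑_a R(e_a,X,Y,e_a) and ρ_s(X,Y) = (1/2)∑_a R(X,Y,e_a,J_se_a). Then for every s ∈ {1,2,3} and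 all X,Y ∈ V, Ric(J_sX,J_sY) + Ric(Y,X) = 2ρ_s(J_sX,Y). -/
open scoped RealInnerProductSpace


private lemma key_aux
    {V : Type*} [NormedAddCommGroup V] [InnerProductSpace ℝ V]
    [FiniteDimensional ℝ V] {m : ℕ}
    (J : V →ₗ[ℝ] V)
    (hJsq : ∀ X : V, J (J X) = -X)
    (R : V →ₗ[ℝ] V →ₗ[ℝ] V →ₗ[ℝ] V →ₗ[ℝ] ℝ)
    (hskew : ∀ X Y Z U : V, R X Y Z U = -(R Y X Z U))
    (hbianchi : ∀ X Y Z U : V, R X Y Z U + R Y Z X U + R Z X Y U = 0)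
    (hcomm : ∀ X Y Z U : V, R X Y (J Z) (J U) = R X Y Z U)
    (e : OrthonormalBasis (Fin m) ℝ V) (X Y : V) :
    (∑ a, R (e a) (J X) (J Y) (e a)) + (∑ a, R (e a) Y X (e a))
      = 2 * ((1 / 2 : ℝ) * ∑ a, R (J X) Y (e a) (J (e a))) := by
  have h1 : ∀ a : Fin m, R (e a) (J X) (J Y) (e a) + R (e a) Y X (e a)
      = R (J X) Y (e a) (J (e a)) := by
    intro a
    have hc1 := hcomm (e a) (J X) (J Y) (e a)
    rw [hJsq, map_neg, LinearMap.neg_apply] at hc1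
    have hb := hbianchi (e a) (J X) Y (J (e a))
    have hc2 := hcomm Y (e a) X (e a)
    have hs := hskew Y (e a) X (e a)
    linarith
  rw [← Finset.sum_add_distrib, Finset.sum_congr rfl (fun a _ => h1 a)]
  ring

theorem stmt_8
    {V : Type*} [NormedAddCommGroup V] [InnerProductSpace ℝ V]
    [FiniteDimensional ℝ V] {n : ℕ}
    (hdim : Module.finrank ℝ V = 4 * n)
    (J₁ J₂ J₃ : V →ₗ[ℝ] V)
    (hJ₁iso : ∀ X Y : V, ⟪J₁ X, J₁ Y⟫ = ⟪X, Y⟫)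
    (hJ₂iso : ∀ X Y : V, ⟪J₂ X, J₂ Y⟫ = ⟪X, Y⟫)
    (hJ₃iso : ∀ X Y : V, ⟪J₃ X, J₃ Y⟫ = ⟪X, Y⟫)
    (hJ₁sq : ∀ X : V, J₁ (J₁ X) = -X)
    (hJ₂sq : ∀ X : V, J₂ (J₂ X) = -X)
    (hJ₃sq : ∀ X : V, J₃ (J₃ X) = -X)
    (hJ₁₂ : ∀ X : V, J₁ (J₂ X) = J₃ X)
    (hJ₂₁ : ∀ X : V, J₂ (J₁ X) = -(J₃ X))
    (R : V →ₗ[ℝ] V →ₗ[ℝ] V →ₗ[ℝ] V →ₗ[ℝ] ℝ)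
    (hskew : ∀ X Y Z U : V, R X Y Z U = -(R Y X Z U))
    (hbianchi : ∀ X Y Z U : V, R X Y Z U + R Y Z X U + R Z X Y U = 0)
    (hcomm₁ : ∀ X Y Z U : V, R X Y (J₁ Z) (J₁ U) = R X Y Z U)
    (hcomm₂ : ∀ X Y Z U : V, R X Y (J₂ Z) (J₂ U) = R X Y Z U)
    (hcomm₃ : ∀ X Y Z U : V, R X Y (J₃ Z) (J₃ U) = R X Y Z U)
    (e : OrthonormalBasis (Fin (4 * n)) ℝ V)
    (Ric : V → V → ℝ)
    (hRic : ∀ X Y : V, Ric X Y = ∑ a, R (e a) X Y (e a))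
    (ρ₁ ρ₂ ρ₃ : V → V → ℝ)
    (hρ₁ : ∀ X Y : V, ρ₁ X Y = (1 / 2 : ℝ) * ∑ a, R X Y (e a) (J₁ (e a)))
    (hρ₂ : ∀ X Y : V, ρ₂ X Y = (1 / 2 : ℝ) * ∑ a, R X Y (e a) (J₂ (e a)))
    (hρ₃ : ∀ X Y : V, ρ₃ X Y = (1 / 2 : ℝ) * ∑ a, R X Y (e a) (J₃ (e a))) :
    ∀ X Y : V,
      Ric (J₁ X) (J₁ Y) + Ric Y X = 2 * ρ₁ (J₁ X) Y ∧
      Ric (J₂ X) (J₂ Y) + Ric Y X = 2 * ρ₂ (J₂ X) Y ∧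
      Ric (J₃ X) (J₃ Y) + Ric Y X = 2 * ρ₃ (J₃ X) Y := by
  intro X Y
  refine ⟨?_, ?_, ?_⟩
  · rw [hRic, hRic, hρ₁]; exact key_aux J₁ hJ₁sq R hskew hbianchi hcomm₁ e X Y
  · rw [hRic, hRic, hρ₂]; exact key_aux J₂ hJ₂sq R hskew hbianchi hcomm₂ e X Y
  · rw [hRic, hRic, hρ₃]; exact key_aux J₃ hJ₃sq R hskew hbianchi hcomm₃ e X Y
end

section
/- Let V be a finite-dimensional real inner product space, let J be a linear isometry of V with J∘J = −id, and let T be a 3-form on V of type (1,2)+(2,1) with respect to J. Define the trilinear form C(X,Y,Z) = (1/2)T(X,JY,JZ) + (1/2)T(JX,Y,JZ). Then for any orthonormal basis (e_a) of V, ∑_{a,b,c} C(e_a,e_b,e_c)² = (1/3)·∑_{a,b,c} T(e_a,e_b,e_c)², i.e. the squared norm of the Chern torsion C equals one third of the squared norm of T (norms taken as full tensor contractions). -/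
open scoped RealInnerProductSpace

private lemma jsum
    {V : Type*} [NormedAddCommGroup V] [InnerProductSpace ℝ V]
    [FiniteDimensional ℝ V]
    (J : V →ₗ[ℝ] V)
    (hJiso : ∀ X Y : V, ⟪J X, J Y⟫ = ⟪X, Y⟫)
    (hJsq : ∀ X : V, J (J X) = -X)
    {ι : Type*} [Fintype ι] (e : OrthonormalBasis ι ℝ V)
    (f g : V →ₗ[ℝ] ℝ) :
    ∑ a, f (J (e a)) * g (J (e a)) = ∑ a, f (e a) * g (e a) := by
  set u := (InnerProductSpace.toDual ℝ V).symm (LinearMap.toContinuousLinearMap f) with hu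
  set v := (InnerProductSpace.toDual ℝ V).symm (LinearMap.toContinuousLinearMap g) with hv
  have hfu : ∀ x : V, f x = ⟪u, x⟫ := fun x => by
    rw [hu, InnerProductSpace.toDual_symm_apply]; rfl
  have hgv : ∀ x : V, g x = ⟪v, x⟫ := fun x => by
    rw [hv, InnerProductSpace.toDual_symm_apply]; rfl
  have hJu : ∀ w x : V, ⟪w, J x⟫ = -⟪J w, x⟫ := fun w x => by
    have h := hJiso (J w) x
    rw [hJsq w, inner_neg_left] at h
    linarith
  have hsum : ∀ w z : V, ∑ a, ⟪w, e a⟫ * ⟪z, e a⟫ = ⟪w, z⟫ := fun w z => by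
    have := e.sum_inner_mul_inner w z
    simpa [real_inner_comm z] using this
  calc ∑ a, f (J (e a)) * g (J (e a))
      = ∑ a, ⟪J u, e a⟫ * ⟪J v, e a⟫ := by
        refine Finset.sum_congr rfl fun a _ => ?_
        rw [hfu, hgv, hJu, hJu]; ring
    _ = ⟪J u, J v⟫ := hsum _ _
    _ = ⟪u, v⟫ := hJiso u v
    _ = ∑ a, ⟪u, e a⟫ * ⟪v, e a⟫ := (hsum _ _).symm
    _ = ∑ a, f (e a) * g (e a) := by
        refine Finset.sum_congr rfl fun a _ => ?_
        rw [hfu, hgv]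

theorem stmt_11
    {V : Type*} [NormedAddCommGroup V] [InnerProductSpace ℝ V]
    [FiniteDimensional ℝ V]
    (J : V →ₗ[ℝ] V)
    (hJiso : ∀ X Y : V, ⟪J X, J Y⟫ = ⟪X, Y⟫)
    (hJsq : ∀ X : V, J (J X) = -X)
    (T : V →ₗ[ℝ] V →ₗ[ℝ] V →ₗ[ℝ] ℝ)
    (halt₁ : ∀ X Y Z : V, T X Y Z = -(T Y X Z))
    (halt₂ : ∀ X Y Z : V, T X Y Z = -(T X Z Y))
    (htype : ∀ X Y Z : V,
      T X Y Z - T (J X) (J Y) Z - T (J X) Y (J Z) - T X (J Y) (J Z) = 0)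
    (C : V → V → V → ℝ)
    (hC : ∀ X Y Z : V,
      C X Y Z = (1 / 2 : ℝ) * T X (J Y) (J Z) + (1 / 2 : ℝ) * T (J X) Y (J Z))
    {ι : Type*} [Fintype ι]
    (e : OrthonormalBasis ι ℝ V) :
    ∑ a, ∑ b, ∑ c, (C (e a) (e b) (e c)) ^ 2 =
      (1 / 3 : ℝ) * ∑ a, ∑ b, ∑ c, (T (e a) (e b) (e c)) ^ 2 := by
  -- C in terms of T and T(J·, J·, ·)
  have hC' : ∀ X Y Z : V,
      C X Y Z = (1 / 2 : ℝ) * (T X Y Z - T (J X) (J Y) Z) := fun X Y Z => by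
    have h := htype X Y Z
    rw [hC]; linarith
  -- sum reorderings
  have reorder : ∀ f : ι → ι → ι → ℝ,
      ∑ a, ∑ b, ∑ c, f a b c = ∑ b, ∑ c, ∑ a, f a b c := fun f => by
    rw [Finset.sum_comm]
    exact Finset.sum_congr rfl fun b _ => Finset.sum_comm
  have swap23 : ∀ f : ι → ι → ι → ℝ,
      ∑ a, ∑ b, ∑ c, f a b c = ∑ a, ∑ b, ∑ c, f a c b := fun f =>
    Finset.sum_congr rfl fun a _ => Finset.sum_comm
  have rev : ∀ f : ι → ι → ι → ℝ,
      ∑ a, ∑ b, ∑ c, f a b c = ∑ a, ∑ b, ∑ c, f c b a := fun f => by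
    calc ∑ x, ∑ y, ∑ z, f x y z = ∑ y, ∑ x, ∑ z, f x y z := Finset.sum_comm
      _ = ∑ y, ∑ z, ∑ x, f x y z := Finset.sum_congr rfl fun _ _ => Finset.sum_comm
      _ = ∑ z, ∑ y, ∑ x, f x y z := Finset.sum_comm
  -- antisymmetry in slots 1 and 3
  have h13 : ∀ X Y Z : V, T X Y Z = -(T Z Y X) := fun X Y Z => by
    have h1 := halt₁ X Y Z
    have h2 := halt₂ Y X Z
    have h3 := halt₁ Y Z X
    linarith
  -- P1 : the squared norm of T(J·,J·,·) equals that of T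
  have hb : ∀ x : V,
      ∑ b, ∑ c, (T x (J (e b)) (e c)) ^ 2 = ∑ b, ∑ c, (T x (e b) (e c)) ^ 2 := fun x => by
    calc ∑ b, ∑ c, (T x (J (e b)) (e c)) ^ 2
        = ∑ c, ∑ b, (T x (J (e b)) (e c)) ^ 2 := Finset.sum_comm
      _ = ∑ c, ∑ b, (T x (e b) (e c)) ^ 2 := by
          refine Finset.sum_congr rfl fun c _ => ?_
          simpa [sq, LinearMap.flip_apply] using
            jsum J hJiso hJsq e ((T x).flip (e c)) ((T x).flip (e c))
      _ = ∑ b, ∑ c, (T x (e b) (e c)) ^ 2 := Finset.sum_comm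
  have P1 : ∑ a, ∑ b, ∑ c, (T (J (e a)) (J (e b)) (e c)) ^ 2
      = ∑ a, ∑ b, ∑ c, (T (e a) (e b) (e c)) ^ 2 := by
    calc ∑ a, ∑ b, ∑ c, (T (J (e a)) (J (e b)) (e c)) ^ 2
        = ∑ a, ∑ b, ∑ c, (T (J (e a)) (e b) (e c)) ^ 2 :=
          Finset.sum_congr rfl fun a _ => hb (J (e a))
      _ = ∑ b, ∑ c, ∑ a, (T (J (e a)) (e b) (e c)) ^ 2 := reorder _
      _ = ∑ b, ∑ c, ∑ a, (T (e a) (e b) (e c)) ^ 2 := by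
          refine Finset.sum_congr rfl fun b _ => Finset.sum_congr rfl fun c _ => ?_
          simpa [sq, LinearMap.flip_apply] using
            jsum J hJiso hJsq e ((T.flip (e b)).flip (e c)) ((T.flip (e b)).flip (e c))
      _ = ∑ a, ∑ b, ∑ c, (T (e a) (e b) (e c)) ^ 2 := (reorder _).symm
  -- the three contractions agree
  have A13eq : ∑ a, ∑ b, ∑ c, T (e a) (e b) (e c) * T (J (e a)) (e b) (J (e c))
      = ∑ a, ∑ b, ∑ c, T (e a) (e b) (e c) * T (J (e a)) (J (e b)) (e c) := by
    rw [swap23 (fun a b c => T (e a) (e b) (e c) * T (J (e a)) (e b) (J (e c)))]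
    refine Finset.sum_congr rfl fun a _ => Finset.sum_congr rfl fun b _ =>
      Finset.sum_congr rfl fun c _ => ?_
    rw [halt₂ (e a) (e c) (e b), halt₂ (J (e a)) (e c) (J (e b))]
    ring
  have A23eq : ∑ a, ∑ b, ∑ c, T (e a) (e b) (e c) * T (e a) (J (e b)) (J (e c))
      = ∑ a, ∑ b, ∑ c, T (e a) (e b) (e c) * T (J (e a)) (J (e b)) (e c) := by
    rw [rev (fun a b c => T (e a) (e b) (e c) * T (e a) (J (e b)) (J (e c)))]
    refine Finset.sum_congr rfl fun a _ => Finset.sum_congr rfl fun b _ =>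
      Finset.sum_congr rfl fun c _ => ?_
    rw [h13 (e c) (e b) (e a), h13 (e c) (J (e b)) (J (e a))]
    ring
  -- contraction of the type identity
  have key : ∀ X Y Z : V, (T X Y Z) ^ 2 =
      T X Y Z * T (J X) (J Y) Z + T X Y Z * T (J X) Y (J Z)
        + T X Y Z * T X (J Y) (J Z) := fun X Y Z => by
    linear_combination T X Y Z * htype X Y Z
  have hS : ∑ a, ∑ b, ∑ c, (T (e a) (e b) (e c)) ^ 2
      = ∑ a, ∑ b, ∑ c, T (e a) (e b) (e c) * T (J (e a)) (J (e b)) (e c)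
        + ∑ a, ∑ b, ∑ c, T (e a) (e b) (e c) * T (J (e a)) (e b) (J (e c))
        + ∑ a, ∑ b, ∑ c, T (e a) (e b) (e c) * T (e a) (J (e b)) (J (e c)) := by
    simp_rw [key, Finset.sum_add_distrib]
  have P2 : ∑ a, ∑ b, ∑ c, T (e a) (e b) (e c) * T (J (e a)) (J (e b)) (e c)
      = (1 / 3 : ℝ) * ∑ a, ∑ b, ∑ c, (T (e a) (e b) (e c)) ^ 2 := by
    rw [A13eq, A23eq] at hS
    linarith
  -- expand C and conclude
  have expand : ∀ a b c : ι, (C (e a) (e b) (e c)) ^ 2 =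
      (1 / 4 : ℝ) * (T (e a) (e b) (e c)) ^ 2
        + (1 / 4 : ℝ) * (T (J (e a)) (J (e b)) (e c)) ^ 2
        - (1 / 2 : ℝ) * (T (e a) (e b) (e c) * T (J (e a)) (J (e b)) (e c)) :=
    fun a b c => by rw [hC']; ring
  simp_rw [expand, Finset.sum_sub_distrib, Finset.sum_add_distrib, ← Finset.mul_sum]
  rw [P1, P2]
  ring
end

section
/- Let V be a finite-dimensional real inner product space, let J be a linear isometry of V with J∘J = −id, and let T be a 3-form on V of type (1,2)+(2,1) with respect to J. Then for any orthonormal basis (e_a) of V, ∑_{a,b,c} T(e_a,e_b,e_c)·T(Je_a,Je_b,e_c) = (1/3)·∑_{a,b,c} T(e_a,e_b,e_c)². -/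
open scoped RealInnerProductSpace

theorem stmt_12
    {V : Type*} [NormedAddCommGroup V] [InnerProductSpace ℝ V]
    [FiniteDimensional ℝ V]
    (J : V →ₗ[ℝ] V)
    (hJiso : ∀ X Y : V, ⟪J X, J Y⟫ = ⟪X, Y⟫)
    (hJsq : ∀ X : V, J (J X) = -X)
    (T : V →ₗ[ℝ] V →ₗ[ℝ] V →ₗ[ℝ] ℝ)
    (halt₁ : ∀ X Y Z : V, T X Y Z = -(T Y X Z))
    (halt₂ : ∀ X Y Z : V, T X Y Z = -(T X Z Y))
    (htype : ∀ X Y Z : V,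
      T X Y Z - T (J X) (J Y) Z - T (J X) Y (J Z) - T X (J Y) (J Z) = 0)
    {ι : Type*} [Fintype ι]
    (e : OrthonormalBasis ι ℝ V) :
    ∑ a, ∑ b, ∑ c, T (e a) (e b) (e c) * T (J (e a)) (J (e b)) (e c) =
      (1 / 3 : ℝ) * ∑ a, ∑ b, ∑ c, (T (e a) (e b) (e c)) ^ 2 := by
  have halt₃ : ∀ X Y Z : V, T X Y Z = -(T Z Y X) := by
    intro X Y Z
    rw [halt₁, halt₂ Y X Z, halt₁ Y Z X]
    ring
  -- B = A
  have hB : ∀ a : ι, ∑ b, ∑ c, T (e a) (e b) (e c) * T (J (e a)) (e b) (J (e c)) =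
      ∑ b, ∑ c, T (e a) (e b) (e c) * T (J (e a)) (J (e b)) (e c) := by
    intro a
    rw [Finset.sum_comm]
    refine Finset.sum_congr rfl fun b _ => Finset.sum_congr rfl fun c _ => ?_
    rw [halt₂ (e a) (e c) (e b), halt₂ (J (e a)) (e c) (J (e b))]
    ring
  -- C = A
  have hC : ∑ a, ∑ b, ∑ c, T (e a) (e b) (e c) * T (e a) (J (e b)) (J (e c)) =
      ∑ a, ∑ b, ∑ c, T (e a) (e b) (e c) * T (J (e a)) (J (e b)) (e c) := by
    rw [Finset.sum_comm]
    rw [Finset.sum_congr rfl (fun b _ => Finset.sum_comm)]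
    rw [Finset.sum_comm]
    refine Finset.sum_congr rfl fun a _ => Finset.sum_congr rfl fun b _ =>
      Finset.sum_congr rfl fun c _ => ?_
    rw [halt₃ (e c) (e b) (e a), halt₃ (e c) (J (e b)) (J (e a))]
    ring
  have hS : ∑ a, ∑ b, ∑ c, (T (e a) (e b) (e c)) ^ 2 =
      3 * ∑ a, ∑ b, ∑ c, T (e a) (e b) (e c) * T (J (e a)) (J (e b)) (e c) := by
    have key : ∀ a b c : ι, (T (e a) (e b) (e c)) ^ 2 =
        T (e a) (e b) (e c) * T (J (e a)) (J (e b)) (e c)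
        + T (e a) (e b) (e c) * T (J (e a)) (e b) (J (e c))
        + T (e a) (e b) (e c) * T (e a) (J (e b)) (J (e c)) := by
      intro a b c
      linear_combination (T (e a) (e b) (e c)) * htype (e a) (e b) (e c)
    calc ∑ a, ∑ b, ∑ c, (T (e a) (e b) (e c)) ^ 2
        = ∑ a, ∑ b, ∑ c, (T (e a) (e b) (e c) * T (J (e a)) (J (e b)) (e c)
            + T (e a) (e b) (e c) * T (J (e a)) (e b) (J (e c))
            + T (e a) (e b) (e c) * T (e a) (J (e b)) (J (e c))) := by
          exact Finset.sum_congr rfl fun a _ => Finset.sum_congr rfl fun b _ =>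
            Finset.sum_congr rfl fun c _ => key a b c
      _ = (∑ a, ∑ b, ∑ c, T (e a) (e b) (e c) * T (J (e a)) (J (e b)) (e c))
          + (∑ a, ∑ b, ∑ c, T (e a) (e b) (e c) * T (J (e a)) (e b) (J (e c)))
          + (∑ a, ∑ b, ∑ c, T (e a) (e b) (e c) * T (e a) (J (e b)) (J (e c))) := by
          simp [Finset.sum_add_distrib]
      _ = 3 * ∑ a, ∑ b, ∑ c, T (e a) (e b) (e c) * T (J (e a)) (J (e b)) (e c) := by
          rw [Finset.sum_congr rfl fun a _ => hB a, hC]; ring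
  rw [hS]; ring
end
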